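/- Define G : [0,1] → [0,1] by G(x) = min{2x, 2(1−x)}, let G^j denote the j-fold composition of G, and define F^L(x) = x − Σ_{j=1}^{L} 2^{−2j} G^j(x). Then F^L is the piecewise linear interpolation of x² at the uniformly spaced breakpoints i/2^L, i = 0, 1, …, 2^L; in particular F^L(i/2^L) = (i/2^L)² for all such i. -/

import Mathlib

/-- The tooth function `G(x) = min (2x) (2(1-x))`. -/
noncomputable def sawG (x : ℝ) : ℝ := min (2 * x) (2 * (1 - x))

/-- The sawtooth approximation `F^L(x) = x - ∑_{j=1}^L 2^{-2j} G^j(x)`. -/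
noncomputable def sawF (L : ℕ) (x : ℝ) : ℝ :=
  x - ∑ j ∈ Finset.Icc 1 L, (2 : ℝ) ^ (-(2 * (j : ℤ))) * sawG^[j] x

lemma sawG_iter (L : ℕ) : ∀ i : ℕ, i < 2 ^ L → ∀ x : ℝ,
    (i : ℝ) / 2 ^ L ≤ x → x ≤ ((i : ℝ) + 1) / 2 ^ L →
    sawG^[L] x = if Even i then 2 ^ L * x - i else ((i : ℝ) + 1) - 2 ^ L * x := by
  induction L with
  | zero =>
    intro i hi x h1 h2
    interval_cases i
    simp
  | succ L ih =>
    intro i hi x h1 h2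
    have hq : (0:ℝ) < 2 ^ L := by positivity
    have hq2 : ((2:ℝ) ^ (L+1)) = 2 * 2 ^ L := by ring
    rw [hq2] at h1 h2
    rw [div_le_iff₀ (by positivity)] at h1
    rw [le_div_iff₀ (by positivity)] at h2
    rw [Function.iterate_succ_apply']
    rcases Nat.even_or_odd i with ⟨k, hk⟩ | ⟨k, hk⟩
    · -- i = k + k
      subst hk
      have hk2 : k < 2 ^ L := by omega
      have hm1 : (k : ℝ) / 2 ^ L ≤ x := by
        rw [div_le_iff₀ hq]; push_cast at h1 ⊢; linarith
      have hm2 : x ≤ ((k : ℝ) + 1) / 2 ^ L := by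
        rw [le_div_iff₀ hq]; push_cast at h2 ⊢; linarith
      rw [ih k hk2 x hm1 hm2]
      have hbx1 : (k:ℝ) + (k:ℝ) ≤ 2 * 2 ^ L * x := by push_cast at h1; linarith
      have hbx2 : 2 * 2 ^ L * x ≤ (k:ℝ) + (k:ℝ) + 1 := by push_cast at h2; linarith
      rcases Nat.even_or_odd k with hke | hko
      · rw [if_pos hke, if_pos (Even.add_self k)]
        unfold sawG
        rw [min_eq_left (by push_cast; nlinarith)]
        push_cast; ring_nf
      · rw [if_neg (Nat.not_even_iff_odd.mpr hko), if_pos (Even.add_self k)]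
        unfold sawG
        rw [min_eq_right (by push_cast; nlinarith)]
        push_cast; ring_nf
    · -- i = 2k+1
      subst hk
      have hk2 : k < 2 ^ L := by omega
      have hm1 : (k : ℝ) / 2 ^ L ≤ x := by
        rw [div_le_iff₀ hq]; push_cast at h1 ⊢; linarith
      have hm2 : x ≤ ((k : ℝ) + 1) / 2 ^ L := by
        rw [le_div_iff₀ hq]; push_cast at h2 ⊢; linarith
      rw [ih k hk2 x hm1 hm2]
      have hbx1 : 2 * (k:ℝ) + 1 ≤ 2 * 2 ^ L * x := by push_cast at h1; linarith
      have hbx2 : 2 * 2 ^ L * x ≤ 2 * (k:ℝ) + 2 := by push_cast at h2; linarith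
      have hodd : ¬ Even (2 * k + 1) := by rw [Nat.even_iff]; omega
      rcases Nat.even_or_odd k with hke | hko
      · rw [if_pos hke, if_neg hodd]
        unfold sawG
        rw [min_eq_right (by push_cast; nlinarith)]
        push_cast; ring_nf
      · rw [if_neg (Nat.not_even_iff_odd.mpr hko), if_neg hodd]
        unfold sawG
        rw [min_eq_left (by push_cast; nlinarith)]
        push_cast; ring_nf

lemma sawF_secant (L : ℕ) : ∀ i : ℕ, i < 2 ^ L → ∀ x : ℝ,
    (i : ℝ) / 2 ^ L ≤ x → x ≤ ((i : ℝ) + 1) / 2 ^ L →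
    sawF L x = ((i : ℝ) / 2 ^ L + ((i : ℝ) + 1) / 2 ^ L) * x -
      ((i : ℝ) / 2 ^ L) * (((i : ℝ) + 1) / 2 ^ L) := by
  induction L with
  | zero =>
    intro i hi x h1 h2
    interval_cases i
    simp [sawF]
  | succ L ih =>
    intro i hi x h1 h2
    have hq : (0:ℝ) < 2 ^ L := by positivity
    have hsplit : sawF (L+1) x = sawF L x - (2:ℝ) ^ (-(2 * ((L:ℤ)+1))) * sawG^[L+1] x := by
      unfold sawF
      rw [Finset.sum_Icc_succ_top (by omega : 1 ≤ L + 1)]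
      push_cast
      ring
    have hw : (2:ℝ) ^ (-(2 * ((L:ℤ)+1))) = ((2:ℝ)^L * 2 ^ L * 4)⁻¹ := by
      rw [zpow_neg]
      congr 1
      rw [show -- 2^(2(L+1)) = 2^L*2^L*4
        (2:ℝ)^L * 2^L * 4 = 2 ^ (2*(L+1)) by ring]
      norm_cast
    have hGL := sawG_iter (L+1) i hi x h1 h2
    have hq2 : ((2:ℝ) ^ (L+1)) = 2 * 2 ^ L := by ring
    rw [hq2] at h1 h2 hGL ⊢
    rcases Nat.even_or_odd i with ⟨k, hk⟩ | ⟨k, hk⟩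
    · subst hk
      have hk2 : k < 2 ^ L := by omega
      have hm1 : (k : ℝ) / 2 ^ L ≤ x := by
        rw [div_le_iff₀ hq]
        rw [div_le_iff₀ (by positivity)] at h1
        push_cast at h1 ⊢; linarith
      have hm2 : x ≤ ((k : ℝ) + 1) / 2 ^ L := by
        rw [le_div_iff₀ hq]
        rw [le_div_iff₀ (by positivity)] at h2
        push_cast at h2 ⊢; linarith
      rw [hsplit, ih k hk2 x hm1 hm2, hGL, if_pos (Even.add_self k), hw]
      push_cast
      field_simp
      ring
    · subst hk
      have hk2 : k < 2 ^ L := by omega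
      have hm1 : (k : ℝ) / 2 ^ L ≤ x := by
        rw [div_le_iff₀ hq]
        rw [div_le_iff₀ (by positivity)] at h1
        push_cast at h1 ⊢; linarith
      have hm2 : x ≤ ((k : ℝ) + 1) / 2 ^ L := by
        rw [le_div_iff₀ hq]
        rw [le_div_iff₀ (by positivity)] at h2
        push_cast at h2 ⊢; linarith
      rw [hsplit, ih k hk2 x hm1 hm2, hGL,
        if_neg (by rw [Nat.even_iff]; omega : ¬ Even (2 * k + 1)), hw]
      push_cast
      field_simp
      ring

/-- `F^L` is the piecewise linear interpolation of `x²` at the uniformly spaced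
breakpoints `i / 2^L`, `i = 0, …, 2^L`: it agrees with `x²` at each breakpoint and
on each interval `[i/2^L, (i+1)/2^L]` it coincides with the secant line of `x²`
through the two endpoints. -/
theorem sawF_interpolates (L : ℕ) :
    (∀ i : ℕ, i ≤ 2 ^ L → sawF L ((i : ℝ) / 2 ^ L) = ((i : ℝ) / 2 ^ L) ^ 2) ∧
    (∀ i : ℕ, i < 2 ^ L → ∀ x ∈ Set.Icc ((i : ℝ) / 2 ^ L) (((i : ℝ) + 1) / 2 ^ L),
      sawF L x =
        ((i : ℝ) / 2 ^ L + ((i : ℝ) + 1) / 2 ^ L) * x -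
          ((i : ℝ) / 2 ^ L) * (((i : ℝ) + 1) / 2 ^ L)) := by
  constructor
  · intro i hi
    have hq : (0:ℝ) < 2 ^ L := by positivity
    rcases lt_or_eq_of_le hi with h | h
    · have := sawF_secant L i h ((i : ℝ) / 2 ^ L) le_rfl
        (by rw [div_le_div_iff₀ hq hq]; nlinarith)
      rw [this]; ring
    · subst h
      have h1 : 2 ^ L - 1 < 2 ^ L := Nat.sub_lt (Nat.two_pow_pos L) one_pos
      have hc : ((2 ^ L - 1 : ℕ) : ℝ) = (2:ℝ)^L - 1 := by
        rw [Nat.cast_sub Nat.one_le_two_pow]; push_cast; ring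
      have := sawF_secant L (2 ^ L - 1) h1 (((2 ^ L : ℕ) : ℝ) / 2 ^ L)
        (by rw [hc, div_le_div_iff₀ hq hq]; push_cast; nlinarith)
        (by rw [hc, div_le_div_iff₀ hq hq]; push_cast; nlinarith)
      rw [this, hc]
      push_cast
      field_simp
      ring
  · intro i hi x hx
    exact sawF_secant L i hi x hx.1 hx.2
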